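/- Let G be a finite tree (a finite connected acyclic simple graph) with vertex set T, let r ∈ T be a fixed vertex, and let V be a real vector space. Then for every vector v₁ ∈ V and every family (v_{αβ}) of vectors of V indexed by the ordered pairs (α,β) of adjacent vertices, there exist a family (ξ_α)_{α∈T} in V and a family (η_{αβ}) in V indexed by ordered pairs of adjacent vertices such that η_{αβ} = η_{βα} for every adjacent pair, ξ_α + η_{αβ} = v_{αβ} for every ordered adjacent pair (α,β), and ξ_r = v₁. -/

import Mathlib

open SimpleGraph

/-- Sum of an antisymmetric edge labeling along a walk. -/
def wsum {T : Type*} {V : Type*} [AddCommGroup V] {G : SimpleGraph T}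
    (d : ∀ a b : T, G.Adj a b → V) : ∀ {a b : T}, G.Walk a b → V
  | _, _, .nil => 0
  | _, _, .cons h p => d _ _ h + wsum d p

theorem wsum_append {T : Type*} {V : Type*} [AddCommGroup V] {G : SimpleGraph T}
    (d : ∀ a b : T, G.Adj a b → V) {a b c : T} (p : G.Walk a b) (q : G.Walk b c) :
    wsum d (p.append q) = wsum d p + wsum d q := by
  induction p with
  | nil => simp [wsum]
  | cons h p ih => simp [wsum, ih, add_assoc]

/-- Surjectivity of the map `V^T ⊕ Δ^E → V^E ⊕ V`,
`({ξ_α},{η_{αβ}}) ↦ ({ξ_α + η_{αβ}}, ξ_r)`, for a finite tree `G` with root `r`: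
given `v₁ ∈ V` and vectors `v_{αβ}` indexed by ordered pairs of adjacent vertices,
there are families `ξ` and `η` with `η_{αβ} = η_{βα}`, `ξ_α + η_{αβ} = v_{αβ}`,
and `ξ_r = v₁`. -/
theorem stmt2 {T : Type*} [Fintype T] (G : SimpleGraph T) (hG : G.IsTree) (r : T)
    (V : Type*) [AddCommGroup V] [Module ℝ V]
    (v₁ : V) (v : ∀ α β : T, G.Adj α β → V) :
    ∃ (ξ : T → V) (η : ∀ α β : T, G.Adj α β → V),
      (∀ (α β : T) (h : G.Adj α β), η α β h = η β α h.symm) ∧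
      (∀ (α β : T) (h : G.Adj α β), ξ α + η α β h = v α β h) ∧
      ξ r = v₁ := by
  classical
  set d : ∀ a b : T, G.Adj a b → V := fun a b h => v b a h.symm - v a b h with hd
  choose p hp hp' using hG.existsUnique_path r
  set ξ : T → V := fun α => v₁ + wsum d (p α) with hξ
  -- key: for adjacent α β, ξ β = ξ α + d α β
  have key : ∀ (α β : T) (h : G.Adj α β), ξ β = ξ α + d α β h := by
    intro α β h
    by_cases hβ : β ∈ (p α).support
    · -- p α = (p β) ++ single edge β α
      have ht : p β = (p α).takeUntil β hβ :=
        (hp' β _ ((hp α).takeUntil hβ)).symm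
      have hdrop : (p α).dropUntil β hβ = SimpleGraph.Walk.cons h.symm .nil := by
        have h1 : ((p α).dropUntil β hβ).IsPath := (hp α).dropUntil hβ
        have h2 : (SimpleGraph.Walk.cons h.symm (.nil : G.Walk α α)).IsPath := by
          simp [SimpleGraph.Walk.isPath_def, h.symm.ne]
        exact ExistsUnique.unique (hG.existsUnique_path β α) h1 h2
      have hsplit := (p α).take_spec hβ
      have : wsum d (p α) = wsum d (p β) + wsum d ((p α).dropUntil β hβ) := by
        rw [ht, ← wsum_append, hsplit]
      rw [hdrop] at this
      simp only [wsum] at this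
      simp only [hξ, this]; simp only [hd]
      abel
    · -- p β = p α ++ single edge α β
      have hpath : ((p α).append (SimpleGraph.Walk.cons h .nil)).IsPath := by
        rw [SimpleGraph.Walk.isPath_def]
        simp only [SimpleGraph.Walk.support_append, SimpleGraph.Walk.support_cons,
          SimpleGraph.Walk.support_nil]
        simp only [List.tail_cons]
        rw [List.nodup_append]
        refine ⟨(hp α).support_nodup, List.nodup_singleton _, ?_⟩
        intro x hx
        simp only [List.mem_singleton]
        rintro _ rfl rfl
        exact hβ hx
      have := hp' β _ hpath
      simp only [hξ, ← this, wsum_append, wsum]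
      abel
  refine ⟨ξ, fun α β h => v α β h - ξ α, ?_, ?_, ?_⟩
  · intro α β h
    have := key α β h
    simp only [hd] at this
    show v α β h - ξ α = v β α h.symm - ξ β
    rw [this]; simp only [hξ]; abel
  · intro α β h
    show ξ α + (v α β h - ξ α) = v α β h
    simp only [hξ]; abel
  · have : p r = .nil := (hp' r .nil (SimpleGraph.Walk.IsPath.nil)).symm
    simp [hξ, this, wsum]
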